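/- For a graph G of k-parallel paths with no isolated vertices, the total forcing number satisfies F_t(G) <= 2k, and this bound is sharp: if G is a disjoint union of k paths each of order at least 2, then F_t(G) = 2k. -/

import Mathlib

open SimpleGraph

/-- The set of vertices colored after `n` steps of the zero forcing process
starting from the initially colored set `F`. -/
def coloredAt {V : Type*} (G : SimpleGraph V) (F : Set V) : ℕ → Set V
  | 0 => F
  | n + 1 => coloredAt G F n ∪
      {w | ∃ u ∈ coloredAt G F n, G.Adj u w ∧
        ∀ x, G.Adj u x → x ≠ w → x ∈ coloredAt G F n}

/-- `F` is a zero forcing set of `G`. -/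
def IsForcingSet {V : Type*} (G : SimpleGraph V) (F : Set V) : Prop :=
  ∀ v, ∃ n, v ∈ coloredAt G F n

/-- The zero forcing number of `G`. -/
noncomputable def forcingNumber {V : Type*} (G : SimpleGraph V) [Fintype V] : ℕ :=
  sInf {k | ∃ F : Finset V, F.card = k ∧ IsForcingSet G ↑F}

/-- The step at which `v` gets colored. -/
noncomputable def kF {V : Type*} (G : SimpleGraph V) (F : Set V) (v : V) : ℕ :=
  sInf {n | v ∈ coloredAt G F n}

/-- `u` forces `w` in the forcing process started at `F`. -/
def Forces {V : Type*} (G : SimpleGraph V) (F : Set V) (u w : V) : Prop :=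
  G.Adj u w ∧ kF G F u < kF G F w ∧
    ∀ x, G.Adj u x → x ≠ w → kF G F x < kF G F w

/-- A chain set corresponding to the forcing set `F`: a partition of the vertex
set into `k` sequences, each starting at a vertex of `F`, in which every vertex
forces its successor. -/
def IsChainSet {V : Type*} {k : ℕ} (G : SimpleGraph V) (F : Set V)
    (R : Fin k → List V) : Prop :=
  (∀ i, R i ≠ []) ∧
  (∀ i (h : R i ≠ []), (R i).head h ∈ F) ∧
  (∀ i, (R i).Chain' (Forces G F)) ∧
  (∀ i, (R i).Nodup) ∧
  (∀ i j, i ≠ j → ∀ v, v ∈ R i → v ∉ R j) ∧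
  (∀ v, ∃ i, v ∈ R i)

/-- `u` precedes `v` in the chain (list) `L`. -/
def Precedes {V : Type*} (L : List V) (u v : V) : Prop :=
  ∃ p q : Fin L.length, (p : ℕ) < (q : ℕ) ∧ L.get p = u ∧ L.get q = v

/-- A standard drawing of `G` as a graph of `k` parallel paths: `k` vertex-disjoint
induced paths covering all vertices, drawn in the plane as parallel horizontal lines
(vertices placed injectively, each path on its own horizontal line with increasing
x-coordinates), such that the edges between different paths, drawn as straight-line
segments, do not cross each other. -/
structure ParallelPathsDrawing {V : Type*} (G : SimpleGraph V) (k : ℕ) where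
  paths : Fin k → List V
  pos : V → ℝ × ℝ
  nonempty : ∀ i, paths i ≠ []
  nodup : ∀ i, (paths i).Nodup
  disjoint : ∀ i j, i ≠ j → ∀ v, v ∈ paths i → v ∉ paths j
  cover : ∀ v, ∃ i, v ∈ paths i
  isPath : ∀ i, (paths i).Chain' G.Adj
  induced : ∀ i, ∀ a b : Fin (paths i).length,
      (a : ℕ) + 1 < (b : ℕ) → ¬ G.Adj ((paths i).get a) ((paths i).get b)
  inj : Function.Injective pos
  sameY : ∀ i, ∀ u ∈ paths i, ∀ v ∈ paths i, (pos u).2 = (pos v).2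
  diffY : ∀ i j, i ≠ j → ∀ u ∈ paths i, ∀ v ∈ paths j, (pos u).2 ≠ (pos v).2
  increasingX : ∀ i, ((paths i).map (fun v => (pos v).1)).Chain' (· < ·)
  noncross : ∀ u v u' v' : V, G.Adj u v → G.Adj u' v' →
      (∀ i, ¬ (u ∈ paths i ∧ v ∈ paths i)) →
      (∀ i, ¬ (u' ∈ paths i ∧ v' ∈ paths i)) →
      ({u, v} : Set V) ≠ {u', v'} →
      openSegment ℝ (pos u) (pos v) ∩ openSegment ℝ (pos u') (pos v') = ∅

/-- `G` admits a standard drawing with `k` parallel paths. -/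
def HasParallelDrawing {V : Type*} (G : SimpleGraph V) (k : ℕ) : Prop :=
  Nonempty (ParallelPathsDrawing G k)

/-- `G` is a graph of `k`-parallel paths: it admits a standard drawing with `k`
parallel paths and with no fewer. -/
def IsGraphOfParallelPaths {V : Type*} (G : SimpleGraph V) (k : ℕ) : Prop :=
  HasParallelDrawing G k ∧ ∀ j, 0 < j → j < k → ¬ HasParallelDrawing G j

/-- `v` has two non-consecutive neighbors in the list `L`. -/
def TwoNonconsecNbrs {V : Type*} (G : SimpleGraph V) (L : List V) (v : V) : Prop :=
  ∃ p q : Fin L.length, (p : ℕ) + 1 < (q : ℕ) ∧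
    G.Adj v (L.get p) ∧ G.Adj v (L.get q)

/-- `F` is a total forcing set: a zero forcing set inducing a subgraph with no
isolated vertex. -/
def IsTotalForcingSet {V : Type*} (G : SimpleGraph V) (F : Set V) : Prop :=
  IsForcingSet G F ∧ ∀ v ∈ F, ∃ u ∈ F, G.Adj u v

/-- The total forcing number of `G`. -/
noncomputable def totalForcingNumber {V : Type*} (G : SimpleGraph V) [Fintype V] : ℕ :=
  sInf {m | ∃ F : Finset V, F.card = m ∧ IsTotalForcingSet G ↑F}

/-- `A` is a real symmetric matrix whose off-diagonal nonzero pattern is the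
adjacency of `G`. -/
def MatrixOfGraph {V : Type*} (G : SimpleGraph V) (A : Matrix V V ℝ) : Prop :=
  A.IsSymm ∧ ∀ i j, i ≠ j → (A i j ≠ 0 ↔ G.Adj i j)

/-- The maximum nullity `M(G)` of `G`. -/
noncomputable def maxNullity {V : Type*} (G : SimpleGraph V) [Fintype V] : ℕ :=
  sSup {m | ∃ A : Matrix V V ℝ, MatrixOfGraph G A ∧ Fintype.card V - A.rank = m}

/-- The disjoint union of `k` paths, the `i`-th of order `n i`. -/
def disjointPaths (k : ℕ) (n : Fin k → ℕ) : SimpleGraph (Σ i, Fin (n i)) :=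
  SimpleGraph.fromRel (fun a b => a.1 = b.1 ∧ (a.2 : ℕ) + 1 = (b.2 : ℕ))

lemma coloredAt_zero {V : Type*} (G : SimpleGraph V) (F : Set V) :
    coloredAt G F 0 = F := rfl

lemma coloredAt_mono {V : Type*} (G : SimpleGraph V) (F : Set V) :
    Monotone (coloredAt G F) := by
  apply monotone_nat_of_le_succ
  intro n
  exact Set.subset_union_left

lemma coloredAt_step {V : Type*} {G : SimpleGraph V} {F P : Set V} {n : ℕ}
    (hP : P ⊆ coloredAt G F n) {u w : V} (hu : u ∈ P) (huw : G.Adj u w)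
    (hall : ∀ x, G.Adj u x → x ≠ w → x ∈ P) : w ∈ coloredAt G F (n + 1) := by
  right
  exact ⟨u, hP hu, huw, fun x hx hxw => hP (hall x hx hxw)⟩

lemma disjointPaths_adj {k : ℕ} {n : Fin k → ℕ} {a b : Σ i, Fin (n i)} :
    (disjointPaths k n).Adj a b ↔
      a.1 = b.1 ∧ ((a.2 : ℕ) + 1 = (b.2 : ℕ) ∨ (b.2 : ℕ) + 1 = (a.2 : ℕ)) := by
  rw [disjointPaths, fromRel_adj]
  constructor
  · rintro ⟨hne, h | h⟩
    · exact ⟨h.1, Or.inl h.2⟩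
    · exact ⟨h.1.symm, Or.inr h.2⟩
  · rintro ⟨h1, h2⟩
    refine ⟨fun heq => ?_, ?_⟩
    · subst heq; rcases h2 with h | h <;> omega
    · rcases h2 with h | h
      · exact Or.inl ⟨h1, h⟩
      · exact Or.inr ⟨h1.symm, h⟩

lemma disjointPaths_adj_fst {k : ℕ} {n : Fin k → ℕ} {a b : Σ i, Fin (n i)} :
    (disjointPaths k n).Adj a b → a.1 = b.1 := fun h => (disjointPaths_adj.mp h).1

section part2
variable {k : ℕ} {n : Fin k → ℕ}

noncomputable def Fpaths (k : ℕ) (n : Fin k → ℕ) (hn : ∀ i, 2 ≤ n i) :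
    Finset (Σ i, Fin (n i)) := by
  classical
  exact Finset.univ.biUnion (fun i : Fin k =>
    {⟨i, ⟨0, by have := hn i; omega⟩⟩, ⟨i, ⟨1, by have := hn i; omega⟩⟩})

lemma mem_Fpaths {hn : ∀ i, 2 ≤ n i} (a : Σ i, Fin (n i)) :
    a ∈ Fpaths k n hn ↔ (a.2 : ℕ) < 2 := by
  classical
  obtain ⟨i, j, hj⟩ := a
  simp only [Fpaths, Finset.mem_biUnion, Finset.mem_univ, true_and, Finset.mem_insert,
    Finset.mem_singleton, Sigma.mk.inj_iff, heq_eq_eq, Fin.mk.injEq]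
  constructor
  · show _ → j < 2
    rintro ⟨i', (⟨rfl, h⟩ | ⟨rfl, h⟩)⟩ <;>
      (simp only [heq_eq_eq, Fin.ext_iff] at h; omega)
  · intro h
    refine ⟨i, ?_⟩
    have h' : j < 2 := h
    rcases (by omega : j = 0 ∨ j = 1) with h0 | h1
    · exact Or.inl ⟨rfl, heq_of_eq (by subst h0; rfl)⟩
    · exact Or.inr ⟨rfl, heq_of_eq (by subst h1; rfl)⟩

lemma card_Fpaths (hn : ∀ i, 2 ≤ n i) : (Fpaths k n hn).card = 2 * k := by
  classical
  rw [Fpaths, Finset.card_biUnion]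
  · rw [Finset.sum_congr rfl (g := fun _ => 2)]
    · simp [mul_comm]
    · intro i _
      rw [Finset.card_insert_of_notMem, Finset.card_singleton]
      simp only [Finset.mem_singleton, Sigma.mk.inj_iff, heq_eq_eq, Fin.mk.injEq]
      rintro ⟨-, h⟩; exact absurd h (by omega)
  · intro i _ j _ hij
    simp only [Finset.disjoint_left, Finset.mem_insert, Finset.mem_singleton]
    rintro a (rfl | rfl) (h | h) <;>
      exact hij (by injection h)
end part2

section part2b
variable {k : ℕ} {n : Fin k → ℕ}

lemma colored_paths (hn : ∀ i, 2 ≤ n i) :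
    ∀ j : ℕ, ∀ (i : Fin k) (hj : j < n i),
      (⟨i, ⟨j, hj⟩⟩ : Σ i, Fin (n i)) ∈ coloredAt (disjointPaths k n) ↑(Fpaths k n hn) j := by
  intro j
  induction j using Nat.strong_induction_on with
  | _ j ih =>
    intro i hj
    rcases lt_or_ge j 2 with h2 | h2
    · apply coloredAt_mono (disjointPaths k n) ↑(Fpaths k n hn) (Nat.zero_le j)
      rw [coloredAt_zero, Finset.mem_coe, mem_Fpaths]
      exact h2
    · have hj1 : j - 1 < n i := by omega
      have hj2 : j - 2 < n i := by omega
      suffices hmem : (⟨i, ⟨j, hj⟩⟩ : Σ i, Fin (n i)) ∈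
          coloredAt (disjointPaths k n) ↑(Fpaths k n hn) ((j-1)+1) by
        have heq : (j-1)+1 = j := by omega
        rwa [heq] at hmem
      apply coloredAt_step (Set.Subset.refl _) (ih (j-1) (by omega) i hj1)
      · rw [disjointPaths_adj]
        refine ⟨rfl, Or.inl ?_⟩
        show (j - 1) + 1 = j
        omega
      · intro x hx hxne
        obtain ⟨i', x2⟩ := x
        obtain ⟨hfst, hvals⟩ := disjointPaths_adj.mp hx
        dsimp only at hfst hvals
        subst hfst
        have hvals' : (x2 : ℕ) = j ∨ (x2 : ℕ) = j - 2 := by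
          rcases hvals with h | h
          · left; omega
          · right; omega
        rcases hvals' with h | h
        · exfalso
          exact hxne (Sigma.ext rfl (heq_of_eq (Fin.ext h)))
        · have hx2eq : x2 = ⟨j - 2, hj2⟩ := Fin.ext h
          subst hx2eq
          exact coloredAt_mono (disjointPaths k n) _ (by omega : j - 2 ≤ j - 1)
            (ih (j-2) (by omega) i hj2)

lemma Fpaths_total (hn : ∀ i, 2 ≤ n i) :
    IsTotalForcingSet (disjointPaths k n) ↑(Fpaths k n hn) := by
  constructor
  · intro v
    rcases v with ⟨i, j, hj⟩
    exact ⟨j, colored_paths hn j i hj⟩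
  · intro v hv
    rcases v with ⟨i, j, hj⟩
    rw [Finset.mem_coe, mem_Fpaths] at hv
    have hv' : j < 2 := hv
    have h2 := hn i
    rcases (by omega : j = 0 ∨ j = 1) with rfl | rfl
    · refine ⟨⟨i, ⟨1, by omega⟩⟩, ?_, ?_⟩
      · rw [Finset.mem_coe, mem_Fpaths]; norm_num
      · rw [disjointPaths_adj]; exact ⟨rfl, Or.inr rfl⟩
    · refine ⟨⟨i, ⟨0, by omega⟩⟩, ?_, ?_⟩
      · rw [Finset.mem_coe, mem_Fpaths]; norm_num
      · rw [disjointPaths_adj]; exact ⟨rfl, Or.inl rfl⟩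

-- lower bound: colored vertices stay in components touched by F
lemma colored_component {F : Set (Σ i, Fin (n i))} :
    ∀ m (v : Σ i, Fin (n i)), v ∈ coloredAt (disjointPaths k n) F m →
      ∃ u ∈ F, u.1 = v.1 := by
  intro m
  induction m with
  | zero => intro v hv; exact ⟨v, hv, rfl⟩
  | succ m ih =>
    intro v hv
    rcases hv with hv | ⟨u, hu, hadj, -⟩
    · exact ih v hv
    · obtain ⟨u', hu', h⟩ := ih u hu
      exact ⟨u', hu', h.trans (disjointPaths_adj_fst hadj)⟩

lemma lower_bound (hn : ∀ i, 2 ≤ n i) (F : Finset (Σ i, Fin (n i)))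
    (hF : IsTotalForcingSet (disjointPaths k n) ↑F) : 2 * k ≤ F.card := by
  classical
  rw [Finset.card_eq_sum_card_fiberwise (f := fun a => a.1) (t := Finset.univ)
    (fun x _ => Finset.mem_univ _)]
  have : 2 * k = ∑ _i : Fin k, 2 := by simp [mul_comm]
  rw [this]
  apply Finset.sum_le_sum
  intro i _
  -- component i contains at least 2 elements of F
  have h0 : (0 : ℕ) < n i := by have := hn i; omega
  obtain ⟨m, hm⟩ := hF.1 ⟨i, ⟨0, h0⟩⟩
  obtain ⟨u, huF, hu1⟩ := colored_component m _ hm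
  obtain ⟨w, hwF, hwadj⟩ := hF.2 u huF
  have hw1 : w.1 = i := (disjointPaths_adj_fst hwadj).trans hu1
  have hne : w ≠ u := (disjointPaths k n).ne_of_adj hwadj
  have h1 : 1 < (F.filter (fun a => a.1 = i)).card := by
    apply Finset.one_lt_card.mpr
    refine ⟨u, ?_, w, ?_, hne.symm⟩
    · rw [Finset.mem_filter]; exact ⟨Finset.mem_coe.mp huF, hu1⟩
    · rw [Finset.mem_filter]; exact ⟨Finset.mem_coe.mp hwF, hw1⟩
  omega

end part2b

lemma part2_final (k : ℕ) (n : Fin k → ℕ) (hn : ∀ i, 2 ≤ n i) :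
    totalForcingNumber (disjointPaths k n) = 2 * k := by
  have hmem : 2 * k ∈ {m | ∃ F : Finset (Σ i, Fin (n i)), F.card = m ∧
      IsTotalForcingSet (disjointPaths k n) ↑F} :=
    ⟨Fpaths k n hn, card_Fpaths hn, Fpaths_total hn⟩
  apply le_antisymm
  · exact Nat.sInf_le hmem
  · obtain ⟨F, hcard, hF⟩ := Nat.sInf_mem (Set.nonempty_of_mem hmem)
    rw [totalForcingNumber, ← hcard]
    exact lower_bound hn F hF


noncomputable def xAt (P Q : ℝ × ℝ) (l : ℝ) : ℝ :=
  P.1 + (l - P.2) * (Q.1 - P.1) / (Q.2 - P.2)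

lemma xAt_left (P Q : ℝ × ℝ) : xAt P Q P.2 = P.1 := by simp [xAt]

lemma xAt_right (P Q : ℝ × ℝ) (h : P.2 ≠ Q.2) : xAt P Q Q.2 = Q.1 := by
  rw [xAt, mul_div_right_comm, div_self (sub_ne_zero.mpr (Ne.symm h))]; ring

/-- the point of the segment `[P,Q]` at level `l` strictly between the levels of
`P` and `Q` lies in the open segment. -/
lemma mem_open_of_level {P Q : ℝ × ℝ} {l : ℝ}
    (h : P.2 < l ∧ l < Q.2 ∨ Q.2 < l ∧ l < P.2) :
    (xAt P Q l, l) ∈ openSegment ℝ P Q := by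
  have hne : Q.2 - P.2 ≠ 0 := by rcases h with ⟨h1, h2⟩ | ⟨h1, h2⟩ <;> intro hc <;> nlinarith
  set t : ℝ := (l - P.2) / (Q.2 - P.2) with ht
  have h0 : 0 < t ∧ t < 1 := by
    rcases h with ⟨h1, h2⟩ | ⟨h1, h2⟩
    · constructor
      · apply div_pos <;> linarith
      · rw [div_lt_one (by linarith)]; linarith
    · constructor
      · apply div_pos_of_neg_of_neg <;> linarith
      · rw [div_lt_one_of_neg (by linarith)]; linarith
  refine ⟨1 - t, t, by linarith [h0.1, h0.2], h0.1, by ring, ?_⟩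
  have : (1 - t) • P + t • Q = (P.1 + t * (Q.1 - P.1), P.2 + t * (Q.2 - P.2)) := by
    simp [Prod.ext_iff, Prod.smul_def, smul_eq_mul]
    constructor <;> ring
  rw [this]
  have ht2 : t * (Q.2 - P.2) = l - P.2 := by
    rw [ht]; field_simp
  rw [Prod.ext_iff]
  constructor
  · show P.1 + t * (Q.1 - P.1) = xAt P Q l
    rw [xAt, ht]; ring
  · show P.2 + t * (Q.2 - P.2) = l
    rw [ht2]; ring

lemma xAt_affine (P Q : ℝ × ℝ) (t l1 l2 : ℝ) :
    xAt P Q ((1 - t) * l1 + t * l2) = (1 - t) * xAt P Q l1 + t * xAt P Q l2 := by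
  rw [xAt, xAt, xAt]
  ring

/-- two segments whose x-coordinates at two common levels compare in opposite
strict orders have intersecting open segments -/
lemma cross_open {A B C D : ℝ × ℝ} {m1 m2 : ℝ}
    (hAB : A.2 ≠ B.2) (hCD : C.2 ≠ D.2)
    (hm1AB : A.2 ≤ m1 ∧ m1 ≤ B.2 ∨ B.2 ≤ m1 ∧ m1 ≤ A.2)
    (hm2AB : A.2 ≤ m2 ∧ m2 ≤ B.2 ∨ B.2 ≤ m2 ∧ m2 ≤ A.2)
    (hm1CD : C.2 ≤ m1 ∧ m1 ≤ D.2 ∨ D.2 ≤ m1 ∧ m1 ≤ C.2)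
    (hm2CD : C.2 ≤ m2 ∧ m2 ≤ D.2 ∨ D.2 ≤ m2 ∧ m2 ≤ C.2)
    (h1 : xAt A B m1 < xAt C D m1) (h2 : xAt C D m2 < xAt A B m2) :
    (openSegment ℝ A B ∩ openSegment ℝ C D).Nonempty := by
  have hm12 : m1 ≠ m2 := by
    intro hc; subst hc; linarith
  set d1 : ℝ := xAt C D m1 - xAt A B m1 with hd1
  set d2 : ℝ := xAt A B m2 - xAt C D m2 with hd2
  have hd1pos : 0 < d1 := by simp [hd1]; linarith
  have hd2pos : 0 < d2 := by simp [hd2]; linarith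
  set t : ℝ := d1 / (d1 + d2) with ht
  have ht0 : 0 < t := div_pos hd1pos (by linarith)
  have ht1 : t < 1 := by
    rw [div_lt_one (by linarith)]; linarith
  set l0 : ℝ := (1 - t) * m1 + t * m2 with hl0
  have hxeq : xAt A B l0 = xAt C D l0 := by
    rw [hl0, xAt_affine, xAt_affine]
    have : t * (d1 + d2) = d1 := by rw [ht]; field_simp
    nlinarith [this]
  have hstrict : m1 < l0 ∧ l0 < m2 ∨ m2 < l0 ∧ l0 < m1 := by
    rcases lt_or_gt_of_ne hm12 with h | h
    · left; constructor <;> nlinarith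
    · right; constructor <;> nlinarith
  have hbtwAB : A.2 < l0 ∧ l0 < B.2 ∨ B.2 < l0 ∧ l0 < A.2 := by
    rcases hm1AB with ⟨u1, v1⟩ | ⟨u1, v1⟩ <;> rcases hm2AB with ⟨u2, v2⟩ | ⟨u2, v2⟩ <;>
      rcases hstrict with ⟨w1, w2⟩ | ⟨w1, w2⟩ <;>
      rcases lt_or_gt_of_ne hAB with hab | hab <;>
      [left; left; left; left; left; left; left; left;
       right; right; right; right; right; right; right; right] <;>
      constructor <;> linarith
  have hbtwCD : C.2 < l0 ∧ l0 < D.2 ∨ D.2 < l0 ∧ l0 < C.2 := by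
    rcases hm1CD with ⟨u1, v1⟩ | ⟨u1, v1⟩ <;> rcases hm2CD with ⟨u2, v2⟩ | ⟨u2, v2⟩ <;>
      rcases hstrict with ⟨w1, w2⟩ | ⟨w1, w2⟩ <;>
      rcases lt_or_gt_of_ne hCD with hab | hab <;>
      [left; left; left; left; left; left; left; left;
       right; right; right; right; right; right; right; right] <;>
      constructor <;> linarith
  refine ⟨(xAt A B l0, l0), mem_open_of_level hbtwAB, ?_⟩
  rw [hxeq]
  exact mem_open_of_level hbtwCD

lemma openSegment_sub_right {A B M : ℝ × ℝ} (c : ℝ) (hc0 : 0 ≤ c) (hc1 : c < 1)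
    (hM : M = (1 - c) • A + c • B) : openSegment ℝ M B ⊆ openSegment ℝ A B := by
  rintro x ⟨a, b, ha, hb, hab, hx⟩
  refine ⟨a * (1 - c), a * c + b, by nlinarith, by nlinarith, by ring_nf; linarith, ?_⟩
  rw [← hx, hM]
  module

lemma openSegment_sub_left {A B M : ℝ × ℝ} (c : ℝ) (hc0 : 0 < c) (hc1 : c ≤ 1)
    (hM : M = (1 - c) • A + c • B) : openSegment ℝ A M ⊆ openSegment ℝ A B := by
  rintro x ⟨a, b, ha, hb, hab, hx⟩
  refine ⟨a + b * (1 - c), b * c, by nlinarith, by nlinarith, by ring_nf; linarith, ?_⟩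
  rw [← hx, hM]
  module

lemma cycle_crossing : ∀ (N : ℕ) (Y px qx : Fin (N+2) → ℝ), Function.Injective Y →
    (∀ t, px t < qx t) →
    ∃ t s : Fin (N+2), t ≠ s ∧
      (openSegment ℝ ((px t, Y t) : ℝ × ℝ) (qx (t+1), Y (t+1)) ∩
       openSegment ℝ ((px s, Y s) : ℝ × ℝ) (qx (s+1), Y (s+1))).Nonempty := by
  intro N
  induction N with
  | zero =>
    intro Y px qx hY hpq
    refine ⟨0, 1, by decide, ?_⟩
    have h01 : (0 : Fin 2) + 1 = 1 := by decide
    have h11 : (1 : Fin 2) + 1 = 0 := by decide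
    rw [h01, h11]
    have hne : Y 0 ≠ Y 1 := fun h => absurd (hY h) (by decide)
    rcases le_total (Y 0) (Y 1) with hle | hle
    · apply cross_open (m1 := Y 0) (m2 := Y 1) (A := ((px 0, Y 0) : ℝ × ℝ))
        (B := ((qx 1, Y 1) : ℝ × ℝ)) (C := ((px 1, Y 1) : ℝ × ℝ)) (D := ((qx 0, Y 0) : ℝ × ℝ))
        hne (Ne.symm hne) (by simp [hle]) (by simp [hle]) (by simp [hle]) (by simp [hle]) ?_ ?_
      · rw [show Y 0 = ((px 0, Y 0) : ℝ × ℝ).2 from rfl, xAt_left,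
          show ((px 0, Y 0) : ℝ × ℝ).2 = ((qx 0, Y 0) : ℝ × ℝ).2 from rfl,
          xAt_right _ _ (Ne.symm hne)]
        exact hpq 0
      · rw [show Y 1 = ((px 1, Y 1) : ℝ × ℝ).2 from rfl, xAt_left,
          show ((px 1, Y 1) : ℝ × ℝ).2 = ((qx 1, Y 1) : ℝ × ℝ).2 from rfl,
          xAt_right _ _ hne]
        exact hpq 1
    · apply cross_open (m1 := Y 0) (m2 := Y 1) (A := ((px 0, Y 0) : ℝ × ℝ))
        (B := ((qx 1, Y 1) : ℝ × ℝ)) (C := ((px 1, Y 1) : ℝ × ℝ)) (D := ((qx 0, Y 0) : ℝ × ℝ))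
        hne (Ne.symm hne) (by simp [hle]) (by simp [hle]) (by simp [hle]) (by simp [hle]) ?_ ?_
      · rw [show Y 0 = ((px 0, Y 0) : ℝ × ℝ).2 from rfl, xAt_left,
          show ((px 0, Y 0) : ℝ × ℝ).2 = ((qx 0, Y 0) : ℝ × ℝ).2 from rfl,
          xAt_right _ _ (Ne.symm hne)]
        exact hpq 0
      · rw [show Y 1 = ((px 1, Y 1) : ℝ × ℝ).2 from rfl, xAt_left,
          show ((px 1, Y 1) : ℝ × ℝ).2 = ((qx 1, Y 1) : ℝ × ℝ).2 from rfl,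
          xAt_right _ _ hne]
        exact hpq 1
  | succ N ihN =>
    intro Y px qx hY hpq
    obtain ⟨t₀, -, hmax0⟩ := Finset.exists_max_image Finset.univ Y ⟨0, Finset.mem_univ 0⟩
    set Y₁ : Fin (N+3) → ℝ := fun t => Y (t + t₀) with hY₁def
    set px₁ : Fin (N+3) → ℝ := fun t => px (t + t₀) with hpx₁def
    set qx₁ : Fin (N+3) → ℝ := fun t => qx (t + t₀) with hqx₁def
    have hY₁inj : Function.Injective Y₁ := fun a b h => by
      have := hY h
      exact add_right_cancel this
    have hpq₁ : ∀ t, px₁ t < qx₁ t := fun t => hpq (t + t₀)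
    have hmax : ∀ t : Fin (N+3), t ≠ 0 → Y₁ t < Y₁ 0 := by
      intro t ht
      have h1 : Y₁ t ≤ Y₁ 0 := by
        show Y (t + t₀) ≤ Y (0 + t₀)
        rw [zero_add]
        exact hmax0 _ (Finset.mem_univ _)
      rcases h1.lt_or_eq with h | h
      · exact h
      · exact absurd (add_right_cancel (hY h)) ht
    suffices hrot : ∃ t s : Fin (N+3), t ≠ s ∧
        (openSegment ℝ ((px₁ t, Y₁ t) : ℝ × ℝ) (qx₁ (t+1), Y₁ (t+1)) ∩
         openSegment ℝ ((px₁ s, Y₁ s) : ℝ × ℝ) (qx₁ (s+1), Y₁ (s+1))).Nonempty by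
      obtain ⟨t, s, hts, hcross⟩ := hrot
      refine ⟨t + t₀, s + t₀, fun h => hts (add_right_cancel h), ?_⟩
      have hseg : ∀ u : Fin (N+3),
          openSegment ℝ ((px₁ u, Y₁ u) : ℝ × ℝ) (qx₁ (u+1), Y₁ (u+1)) =
          openSegment ℝ ((px (u + t₀), Y (u + t₀)) : ℝ × ℝ)
            (qx ((u + t₀) + 1), Y ((u + t₀) + 1)) := by
        intro u
        have : u + 1 + t₀ = u + t₀ + 1 := add_right_comm u 1 t₀
        show openSegment ℝ ((px (u + t₀), Y (u + t₀)) : ℝ × ℝ)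
            (qx ((u + 1) + t₀), Y ((u + 1) + t₀)) = _
        rw [this]
      rw [← hseg t, ← hseg s]
      exact hcross
    -- Fin arithmetic facts
    have f1 : (0 : Fin (N+3)) + 1 = 1 := by
      rw [Fin.ext_iff, Fin.val_add]; simp
    have f2 : Fin.last (N+2) + 1 = (0 : Fin (N+3)) := by
      rw [Fin.ext_iff, Fin.val_add]; simp [Fin.last]
    have f3 : Fin.last (N+2) ≠ (0 : Fin (N+3)) := by
      rw [Ne, Fin.ext_iff]; simp [Fin.last]
    have f4 : Fin.last (N+2) ≠ (1 : Fin (N+3)) := by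
      rw [Ne, Fin.ext_iff]; simp [Fin.last]
    have f5 : Fin.last (N+1) + 1 = (0 : Fin (N+2)) := by
      rw [Fin.ext_iff, Fin.val_add]; simp [Fin.last]
    have f6 : (0 : Fin (N+2)).succ = 1 := by
      rw [Fin.ext_iff]; simp
    have f7 : (Fin.last (N+1)).succ = Fin.last (N+2) := Fin.succ_last _
    have f8 : ∀ u : Fin (N+2), u ≠ Fin.last (N+1) → (u+1).succ = u.succ + 1 := by
      intro u hu
      have hu' : (u : ℕ) < N + 1 := by
        rcases lt_or_eq_of_le (Nat.lt_succ_iff.mp u.2) with h | h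
        · exact h
        · exact absurd (Fin.ext h : u = Fin.last (N+1)) hu
      apply Fin.ext
      simp only [Fin.val_succ, Fin.val_add, Fin.val_one]
      rw [Nat.mod_eq_of_lt (by omega), Nat.mod_eq_of_lt (by omega)]
    set prev : Fin (N+3) := Fin.last (N+2) with hprevdef
    have hY10 : Y₁ 1 < Y₁ 0 := hmax 1 (by rw [Ne, Fin.ext_iff]; simp)
    have hYp0 : Y₁ prev < Y₁ 0 := hmax prev f3
    have hYp1 : Y₁ prev ≠ Y₁ 1 := fun h => f4 (hY₁inj h)
    rcases lt_or_gt_of_ne hYp1 with hcB | hcA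
    · -- case B : Y₁ prev < Y₁ 1
      have hden : Y₁ 0 - Y₁ prev ≠ 0 := sub_ne_zero.mpr hYp0.ne'
      set z : ℝ := xAt (px₁ prev, Y₁ prev) (qx₁ 0, Y₁ 0) (Y₁ 1) with hzdef
      by_cases hz : z < qx₁ 1
      · refine ⟨prev, 0, f3, ?_⟩
        rw [f1, f2]
        have e2 : xAt ((px₁ prev, Y₁ prev) : ℝ × ℝ) ((qx₁ 0, Y₁ 0) : ℝ × ℝ) (Y₁ 0)
            = qx₁ 0 := xAt_right _ _ hYp0.ne
        have e3 : xAt ((px₁ 0, Y₁ 0) : ℝ × ℝ) ((qx₁ 1, Y₁ 1) : ℝ × ℝ) (Y₁ 0)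
            = px₁ 0 := xAt_left _ _
        have e4 : xAt ((px₁ 0, Y₁ 0) : ℝ × ℝ) ((qx₁ 1, Y₁ 1) : ℝ × ℝ) (Y₁ 1)
            = qx₁ 1 := xAt_right _ _ hY10.ne'
        apply cross_open (m1 := Y₁ 1) (m2 := Y₁ 0)
          (A := ((px₁ prev, Y₁ prev) : ℝ × ℝ)) (B := ((qx₁ 0, Y₁ 0) : ℝ × ℝ))
          (C := ((px₁ 0, Y₁ 0) : ℝ × ℝ)) (D := ((qx₁ 1, Y₁ 1) : ℝ × ℝ))
          hYp0.ne hY10.ne'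
          (Or.inl ⟨hcB.le, hY10.le⟩) (Or.inl ⟨hYp0.le, le_refl _⟩)
          (Or.inr ⟨le_refl _, hY10.le⟩) (Or.inr ⟨hY10.le, le_refl _⟩)
          (by rw [e4, ← hzdef]; exact hz) (by rw [e3, e2]; exact hpq₁ 0)
      · push_neg at hz
        set Y' : Fin (N+2) → ℝ := fun t => Y₁ t.succ with hY'def
        set px' : Fin (N+2) → ℝ := fun t => px₁ t.succ with hpx'def
        set qx' : Fin (N+2) → ℝ := fun t => if t = 0 then z else qx₁ t.succ with hqx'def
        have hY'inj : Function.Injective Y' :=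
          fun a b h => Fin.succ_injective _ (hY₁inj h)
        have hpq' : ∀ t, px' t < qx' t := by
          intro t
          show px₁ t.succ < qx' t
          by_cases ht : t = 0
          · subst ht
            show px₁ (0 : Fin (N+2)).succ < if (0 : Fin (N+2)) = 0 then z else _
            rw [if_pos rfl, f6]
            exact lt_of_lt_of_le (hpq₁ 1) hz
          · show px₁ t.succ < if t = 0 then z else qx₁ t.succ
            rw [if_neg ht]
            exact hpq₁ t.succ
        obtain ⟨t, s, hts, hcross⟩ := ihN Y' px' qx' hY'inj hpq'
        set lift : Fin (N+2) → Fin (N+3) :=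
          fun t => if t = Fin.last (N+1) then prev else t.succ with hliftdef
        have hliftinj : lift t ≠ lift s := by
          intro h
          apply hts
          simp only [hliftdef] at h
          by_cases ht : t = Fin.last (N+1) <;> by_cases hs : s = Fin.last (N+1)
          · rw [ht, hs]
          · rw [if_pos ht, if_neg hs] at h
            exact absurd (Fin.succ_injective _ (h.symm.trans f7.symm)) hs
          · rw [if_neg ht, if_pos hs] at h
            exact absurd (Fin.succ_injective _ (h.trans f7.symm)) ht
          · rw [if_neg ht, if_neg hs] at h
            exact Fin.succ_injective _ h
        have hsub : ∀ u : Fin (N+2),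
            openSegment ℝ ((px' u, Y' u) : ℝ × ℝ) (qx' (u+1), Y' (u+1)) ⊆
            openSegment ℝ ((px₁ (lift u), Y₁ (lift u)) : ℝ × ℝ)
              (qx₁ (lift u + 1), Y₁ (lift u + 1)) := by
          intro u
          by_cases hu : u = Fin.last (N+1)
          · subst hu
            have hl : lift (Fin.last (N+1)) = prev := by
              show (if Fin.last (N+1) = Fin.last (N+1) then prev else _) = prev
              rw [if_pos rfl]
            rw [hl, f2]
            have hx1 : px' (Fin.last (N+1)) = px₁ prev := by
              show px₁ (Fin.last (N+1)).succ = px₁ prev; rw [f7]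
            have hy1 : Y' (Fin.last (N+1)) = Y₁ prev := by
              show Y₁ (Fin.last (N+1)).succ = Y₁ prev; rw [f7]
            have hx2 : qx' (Fin.last (N+1) + 1) = z := by
              rw [f5]
              show (if (0 : Fin (N+2)) = 0 then z else _) = z
              rw [if_pos rfl]
            have hy2 : Y' (Fin.last (N+1) + 1) = Y₁ 1 := by
              rw [f5]
              show Y₁ (0 : Fin (N+2)).succ = Y₁ 1; rw [f6]
            rw [hx1, hy1, hx2, hy2]
            apply openSegment_sub_left (A := ((px₁ prev, Y₁ prev) : ℝ × ℝ))
              (B := ((qx₁ 0, Y₁ 0) : ℝ × ℝ))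
              ((Y₁ 1 - Y₁ prev) / (Y₁ 0 - Y₁ prev))
              (div_pos (by linarith) (by linarith))
              (by rw [div_le_one (by linarith)]; linarith)
            rw [Prod.ext_iff]
            constructor
            · show z = _
              rw [hzdef, xAt]
              simp only [Prod.fst_add, Prod.smul_fst, smul_eq_mul]
              field_simp
              ring
            · show Y₁ 1 = _
              simp only [Prod.snd_add, Prod.smul_snd, smul_eq_mul]
              field_simp
              ring
          · have hl : lift u = u.succ := by
              show (if u = Fin.last (N+1) then prev else u.succ) = u.succ
              rw [if_neg hu]
            have hu1 : u + 1 ≠ 0 := by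
              intro h
              apply hu
              have hval := congrArg Fin.val h
              rw [Fin.val_add, Fin.val_one, Fin.val_zero] at hval
              have hub : (u : ℕ) < N + 2 := u.2
              have hNu : (u : ℕ) = N + 1 := by
                rcases Nat.lt_or_ge ((u : ℕ) + 1) (N+2) with hlt | hge
                · rw [Nat.mod_eq_of_lt hlt] at hval; omega
                · omega
              apply Fin.ext
              rw [hNu]
              rfl
            have hx2 : qx' (u+1) = qx₁ (u+1).succ := by
              show (if u + 1 = 0 then z else qx₁ (u+1).succ) = qx₁ (u+1).succ
              rw [if_neg hu1]
            rw [hl, hx2]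
            show openSegment ℝ ((px₁ u.succ, Y₁ u.succ) : ℝ × ℝ) (qx₁ (u+1).succ, Y₁ (u+1).succ) ⊆ _
            rw [f8 u hu]
        exact ⟨lift t, lift s, hliftinj,
          hcross.mono (Set.inter_subset_inter (hsub t) (hsub s))⟩
    · -- case A : Y₁ 1 < Y₁ prev
      have hden : Y₁ 1 - Y₁ 0 ≠ 0 := sub_ne_zero.mpr hY10.ne
      set X : ℝ := xAt (px₁ 0, Y₁ 0) (qx₁ 1, Y₁ 1) (Y₁ prev) with hXdef
      by_cases hX : px₁ prev < X
      · refine ⟨0, prev, fun h => f3 h.symm, ?_⟩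
        rw [f1, f2]
        have e1 : xAt ((px₁ 0, Y₁ 0) : ℝ × ℝ) ((qx₁ 1, Y₁ 1) : ℝ × ℝ) (Y₁ 0)
            = px₁ 0 := xAt_left _ _
        have e2 : xAt ((px₁ prev, Y₁ prev) : ℝ × ℝ) ((qx₁ 0, Y₁ 0) : ℝ × ℝ) (Y₁ 0)
            = qx₁ 0 := xAt_right _ _ hYp0.ne
        have e3 : xAt ((px₁ prev, Y₁ prev) : ℝ × ℝ) ((qx₁ 0, Y₁ 0) : ℝ × ℝ) (Y₁ prev)
            = px₁ prev := xAt_left _ _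
        apply cross_open (m1 := Y₁ 0) (m2 := Y₁ prev)
          (A := ((px₁ 0, Y₁ 0) : ℝ × ℝ)) (B := ((qx₁ 1, Y₁ 1) : ℝ × ℝ))
          (C := ((px₁ prev, Y₁ prev) : ℝ × ℝ)) (D := ((qx₁ 0, Y₁ 0) : ℝ × ℝ))
          hY10.ne' hYp0.ne
          (Or.inr ⟨hY10.le, le_refl _⟩) (Or.inr ⟨hcA.le, hYp0.le⟩)
          (Or.inl ⟨hYp0.le, le_refl _⟩) (Or.inl ⟨le_refl _, hYp0.le⟩)
          (by rw [e1, e2]; exact hpq₁ 0) (by rw [e3, ← hXdef]; exact hX)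
      · push_neg at hX
        set Y' : Fin (N+2) → ℝ := fun t => Y₁ t.succ with hY'def
        set px' : Fin (N+2) → ℝ :=
          fun t => if t = Fin.last (N+1) then X else px₁ t.succ with hpx'def
        set qx' : Fin (N+2) → ℝ := fun t => qx₁ t.succ with hqx'def
        have hY'inj : Function.Injective Y' :=
          fun a b h => Fin.succ_injective _ (hY₁inj h)
        have hpq' : ∀ t, px' t < qx' t := by
          intro t
          show px' t < qx₁ t.succ
          by_cases ht : t = Fin.last (N+1)
          · subst ht
            show (if Fin.last (N+1) = Fin.last (N+1) then X else _) < _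
            rw [if_pos rfl, f7]
            exact lt_of_le_of_lt hX (hpq₁ prev)
          · show (if t = Fin.last (N+1) then X else px₁ t.succ) < _
            rw [if_neg ht]
            exact hpq₁ t.succ
        obtain ⟨t, s, hts, hcross⟩ := ihN Y' px' qx' hY'inj hpq'
        set lift : Fin (N+2) → Fin (N+3) :=
          fun t => if t = Fin.last (N+1) then 0 else t.succ with hliftdef
        have hliftinj : lift t ≠ lift s := by
          intro h
          apply hts
          simp only [hliftdef] at h
          by_cases ht : t = Fin.last (N+1) <;> by_cases hs : s = Fin.last (N+1)
          · rw [ht, hs]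
          · rw [if_pos ht, if_neg hs] at h
            exact absurd h.symm (Fin.succ_ne_zero s)
          · rw [if_neg ht, if_pos hs] at h
            exact absurd h (Fin.succ_ne_zero t)
          · rw [if_neg ht, if_neg hs] at h
            exact Fin.succ_injective _ h
        have hsub : ∀ u : Fin (N+2),
            openSegment ℝ ((px' u, Y' u) : ℝ × ℝ) (qx' (u+1), Y' (u+1)) ⊆
            openSegment ℝ ((px₁ (lift u), Y₁ (lift u)) : ℝ × ℝ)
              (qx₁ (lift u + 1), Y₁ (lift u + 1)) := by
          intro u
          by_cases hu : u = Fin.last (N+1)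
          · subst hu
            have hl : lift (Fin.last (N+1)) = 0 := by
              show (if Fin.last (N+1) = Fin.last (N+1) then (0 : Fin (N+3)) else _) = 0
              rw [if_pos rfl]
            rw [hl, f1]
            have hx1 : px' (Fin.last (N+1)) = X := by
              show (if Fin.last (N+1) = Fin.last (N+1) then X else _) = X
              rw [if_pos rfl]
            have hy1 : Y' (Fin.last (N+1)) = Y₁ prev := by
              show Y₁ (Fin.last (N+1)).succ = Y₁ prev; rw [f7]
            have hx2 : qx' (Fin.last (N+1) + 1) = qx₁ 1 := by
              rw [f5]
              show qx₁ (0 : Fin (N+2)).succ = qx₁ 1; rw [f6]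
            have hy2 : Y' (Fin.last (N+1) + 1) = Y₁ 1 := by
              rw [f5]
              show Y₁ (0 : Fin (N+2)).succ = Y₁ 1; rw [f6]
            rw [hx1, hy1, hx2, hy2]
            apply openSegment_sub_right (A := ((px₁ 0, Y₁ 0) : ℝ × ℝ))
              (B := ((qx₁ 1, Y₁ 1) : ℝ × ℝ))
              ((Y₁ prev - Y₁ 0) / (Y₁ 1 - Y₁ 0))
              (le_of_lt (div_pos_of_neg_of_neg (by linarith) (by linarith)))
              (by rw [div_lt_one_of_neg (by linarith)]; linarith)
            rw [Prod.ext_iff]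
            constructor
            · show X = _
              rw [hXdef, xAt]
              simp only [Prod.fst_add, Prod.smul_fst, smul_eq_mul]
              field_simp
              ring
            · show Y₁ prev = _
              simp only [Prod.snd_add, Prod.smul_snd, smul_eq_mul]
              field_simp
              ring
          · have hl : lift u = u.succ := by
              show (if u = Fin.last (N+1) then (0 : Fin (N+3)) else u.succ) = u.succ
              rw [if_neg hu]
            have hx1 : px' u = px₁ u.succ := by
              show (if u = Fin.last (N+1) then X else px₁ u.succ) = px₁ u.succ
              rw [if_neg hu]
            rw [hl, hx1]
            show openSegment ℝ ((px₁ u.succ, Y₁ u.succ) : ℝ × ℝ)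
              (qx₁ (u+1).succ, Y₁ (u+1).succ) ⊆ _
            rw [f8 u hu]
        exact ⟨lift t, lift s, hliftinj,
          hcross.mono (Set.inter_subset_inter (hsub t) (hsub s))⟩

lemma exists_periodic_orbit {α : Type*} [Finite α] (f : α → α) (hf : ∀ a, f a ≠ a) (a₀ : α) :
    ∃ (r : ℕ) (c : ℕ → α), 2 ≤ r ∧ (∀ t, c (t+1) = f (c t)) ∧ (∀ t, c (t + r) = c t) ∧
      (∀ t s, t < s → s < r → c t ≠ c s) ∧ (∀ x, c (x % r) = c x) := by
  classical
  set g : ℕ → α := fun n => f^[n] a₀ with hgdef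
  obtain ⟨x, y, hxy, heq⟩ := Finite.exists_ne_map_eq_of_infinite g
  have hP : ∃ b, ∃ a, a < b ∧ g a = g b := by
    rcases lt_or_gt_of_ne hxy with h | h
    · exact ⟨y, x, h, heq⟩
    · exact ⟨x, y, h, heq.symm⟩
  set b := Nat.find hP with hbdef
  obtain ⟨a, hab, hg⟩ := Nat.find_spec hP
  set r := b - a with hrdef
  set c : ℕ → α := fun t => g (a + t) with hcdef
  have hsucc : ∀ t, c (t+1) = f (c t) := by
    intro t
    show g (a + (t+1)) = f (g (a + t))
    rw [show a + (t+1) = (a + t) + 1 by omega]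
    exact Function.iterate_succ_apply' f (a+t) a₀
  have hper : ∀ t, c (t + r) = c t := by
    intro t
    show g (a + (t + r)) = g (a + t)
    have h1 : a + (t + r) = t + b := by omega
    have h2 : a + t = t + a := by omega
    rw [h1, h2]
    show f^[t + b] a₀ = f^[t + a] a₀
    rw [Function.iterate_add_apply, Function.iterate_add_apply]
    show f^[t] (g b) = f^[t] (g a)
    rw [hg]
  have hdist : ∀ t s, t < s → s < r → c t ≠ c s := by
    intro t s hts hsr hcts
    have hlt : a + s < b := by omega
    exact Nat.find_min hP hlt ⟨a + t, by omega, hcts⟩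
  have hr2 : 2 ≤ r := by
    have hr1 : 1 ≤ r := by omega
    by_contra hlt
    have hr : r = 1 := by omega
    have := hper 0
    rw [hr] at this
    simp only [zero_add] at this
    rw [hsucc 0] at this
    exact hf (c 0) this
  refine ⟨r, c, hr2, hsucc, hper, hdist, ?_⟩
  intro x
  induction x using Nat.strong_induction_on with
  | _ x ih =>
    by_cases hx : x < r
    · rw [Nat.mod_eq_of_lt hx]
    · rw [Nat.mod_eq_sub_mod (le_of_not_gt hx), ih (x - r) (by omega)]
      calc c (x - r) = c ((x - r) + r) := (hper _).symm
        _ = c x := by rw [show (x - r) + r = x by omega]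


set_option linter.unusedSectionVars false

section drawing
variable {V : Type} {G : SimpleGraph V} {k : ℕ}

lemma xlt (D : ParallelPathsDrawing G k) (i : Fin k)
    (p q : Fin (D.paths i).length) (hpq : (p : ℕ) < (q : ℕ)) :
    (D.pos ((D.paths i).get p)).1 < (D.pos ((D.paths i).get q)).1 := by
  have h := D.increasingX i
  rw [List.Chain', List.isChain_iff_pairwise] at h
  rw [List.pairwise_iff_get] at h
  have := h ⟨p, by simp⟩ ⟨q, by simp⟩ (by simpa using hpq)
  simpa using this

lemma adj_get_get (D : ParallelPathsDrawing G k) (i : Fin k)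
    (a b : Fin (D.paths i).length)
    (h : G.Adj ((D.paths i).get a) ((D.paths i).get b)) :
    (a : ℕ) + 1 = b ∨ (b : ℕ) + 1 = a := by
  rcases lt_trichotomy (a : ℕ) (b : ℕ) with hab | hab | hab
  · rcases Nat.lt_or_ge ((a : ℕ) + 1) b with h2 | h2
    · exact absurd h (D.induced i a b h2)
    · left; omega
  · exfalso
    exact h.ne (congrArg _ (Fin.ext hab))
  · rcases Nat.lt_or_ge ((b : ℕ) + 1) a with h2 | h2
    · exact absurd h.symm (D.induced i b a h2)
    · right; omega

lemma adj_consec (D : ParallelPathsDrawing G k) (i : Fin k)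
    (p : ℕ) (hp : p + 1 < (D.paths i).length) :
    G.Adj ((D.paths i).get ⟨p, by omega⟩) ((D.paths i).get ⟨p+1, hp⟩) := by
  have h := D.isPath i
  rw [List.Chain', List.isChain_iff_getElem] at h
  exact h p (by omega)

lemma path_unique (D : ParallelPathsDrawing G k) {i i' : Fin k} {v : V}
    (h1 : v ∈ D.paths i) (h2 : v ∈ D.paths i') : i = i' := by
  by_contra hne
  exact D.disjoint i i' hne v h1 h2

/-- the set of vertices in the prefix configuration `m` -/
def Cset (D : ParallelPathsDrawing G k) (m : Fin k → ℕ) : Set V :=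
  {v | ∃ (i : Fin k) (p : Fin (D.paths i).length), (p : ℕ) < m i ∧ (D.paths i).get p = v}


lemma exists_force (D : ParallelPathsDrawing G k) (m : Fin k → ℕ)
    (hml : ∀ i, min 2 (D.paths i).length ≤ m i)
    (hmu : ∀ i, m i ≤ (D.paths i).length)
    (hinc : ∃ i, m i < (D.paths i).length) :
    ∃ (i : Fin k) (h : m i < (D.paths i).length),
      ∀ x, G.Adj ((D.paths i).get ⟨m i - 1, by omega⟩) x →
        x ≠ (D.paths i).get ⟨m i, h⟩ → x ∈ Cset D m := by
  classical
  by_contra hcon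
  push_neg at hcon
  -- basic length facts
  have hlen1 : ∀ i, 0 < (D.paths i).length :=
    fun i => List.length_pos_iff.mpr (D.nonempty i)
  have hlen2 : ∀ i, m i < (D.paths i).length → 2 ≤ m i := by
    intro i hi
    have h1 := hml i
    rcases le_or_gt 2 (D.paths i).length with h2 | h2
    · rw [min_eq_left h2] at h1; exact h1
    · rw [min_eq_right (by omega)] at h1; omega
  set S := {i : Fin k // m i < (D.paths i).length} with hSdef
  have hS0 : S := ⟨hinc.choose, hinc.choose_spec⟩
  set ui : S → V := fun i => (D.paths i.1).get ⟨m i.1 - 1, by have := i.2; omega⟩ with huidef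
  set wi : S → V := fun i => (D.paths i.1).get ⟨m i.1, i.2⟩ with hwidef
  have hui_mem : ∀ i : S, ui i ∈ D.paths i.1 := fun i => List.get_mem _ _
  have hui_col : ∀ i : S, ui i ∈ Cset D m := by
    intro i
    refine ⟨i.1, ⟨m i.1 - 1, Nat.lt_of_le_of_lt (Nat.sub_le _ _) i.2⟩, ?_, rfl⟩
    show m i.1 - 1 < m i.1
    have := hlen2 i.1 i.2
    omega
  have hz : ∀ i : S, ∃ x, G.Adj (ui i) x ∧ x ≠ wi i ∧ x ∉ Cset D m := by
    intro i
    obtain ⟨x, h1, h2, h3⟩ := hcon i.1 i.2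
    exact ⟨x, h1, h2, h3⟩
  choose z hz1 hz2 hz3 using hz
  -- the path of z i, and the index of z i in any path containing it
  have hzidx : ∀ (i' : S) (jj : Fin k), z i' ∈ D.paths jj →
      ∃ b : Fin (D.paths jj).length, (D.paths jj).get b = z i' ∧ m jj ≤ (b : ℕ) := by
    intro i' jj hmem
    obtain ⟨b, hb⟩ := List.mem_iff_get.mp hmem
    refine ⟨b, hb, ?_⟩
    by_contra hlt
    exact hz3 i' ⟨jj, b, by omega, hb⟩
  have hzcov : ∀ i : S, ∃ jj : Fin k, z i ∈ D.paths jj := fun i => D.cover (z i)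
  choose jz hjz using hzcov
  have hjzS : ∀ i : S, m (jz i) < (D.paths (jz i)).length := by
    intro i
    obtain ⟨b, hb, hmb⟩ := hzidx i (jz i) (hjz i)
    exact lt_of_le_of_lt hmb b.2
  set f : S → S := fun i => ⟨jz i, hjzS i⟩ with hfdef
  have hzf : ∀ i : S, z i ∈ D.paths (f i).1 := fun i => hjz i
  have hfne : ∀ i : S, f i ≠ i := by
    intro i hfi
    have hmem : z i ∈ D.paths i.1 := by
      have := hzf i
      rw [hfi] at this
      exact this
    obtain ⟨b, hb, hmb⟩ := hzidx i i.1 hmem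
    have hadj : G.Adj ((D.paths i.1).get ⟨m i.1 - 1,
        Nat.lt_of_le_of_lt (Nat.sub_le _ _) i.2⟩)
        ((D.paths i.1).get b) := by rw [hb]; exact hz1 i
    have := adj_get_get D i.1 _ _ hadj
    have hm2 := hlen2 i.1 i.2
    rcases this with h | h
    · -- b = m : z i = wi i
      have h' : m i.1 - 1 + 1 = (b : ℕ) := h
      apply hz2 i
      rw [← hb]
      congr 1
      apply Fin.ext
      show (b : ℕ) = m i.1
      omega
    · -- b = m - 2 : contradicts b ≥ m
      have h' : (b : ℕ) + 1 = m i.1 - 1 := h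
      omega
  -- extract a cycle
  obtain ⟨r, c, hr2, hcsucc, hcper, hcdist, hcmod⟩ := exists_periodic_orbit f hfne hS0
  obtain ⟨N, hNr⟩ : ∃ N : ℕ, r = N + 2 := ⟨r - 2, by omega⟩
  subst hNr
  -- data for the cyclic crossing lemma
  set Yf : Fin (N+2) → ℝ := fun t => (D.pos (ui (c (t : ℕ)))).2 with hYfdef
  set pxf : Fin (N+2) → ℝ := fun t => (D.pos (ui (c (t : ℕ)))).1 with hpxfdef
  set qxf : Fin (N+2) → ℝ := fun t => (D.pos (z (c ((t : ℕ) + (N+2) - 1)))).1 with hqxfdef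
  -- key successor identities
  have hcf : ∀ a : ℕ, c (a + 1) = f (c a) := hcsucc
  have hzland : ∀ a : ℕ, z (c a) ∈ D.paths (c (a + 1)).1 := by
    intro a
    rw [hcf a]
    exact hzf (c a)
  have hidx : ∀ t : Fin (N+2), c (((t + 1 : Fin (N+2)) : ℕ) + (N+2) - 1) = c (t : ℕ) := by
    intro t
    have hval : ((t + 1 : Fin (N+2)) : ℕ) = ((t : ℕ) + 1) % (N+2) := by
      rw [Fin.val_add, Fin.val_one]
    rw [hval]
    have htr : (t : ℕ) < N+2 := t.2
    rcases Nat.lt_or_ge ((t : ℕ) + 1) (N+2) with hlt | hge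
    · rw [Nat.mod_eq_of_lt hlt]
      calc c ((t : ℕ) + 1 + (N+2) - 1) = c ((t : ℕ) + (N+2)) :=
            congrArg c (by omega)
        _ = c (t : ℕ) := hcper _
    · have h0 : ((t : ℕ) + 1) % (N+2) = 0 := by
        have he : (t : ℕ) + 1 = N+2 := by omega
        rw [he, Nat.mod_self]
      rw [h0]
      exact congrArg c (by omega)
  have hcnext : ∀ t : Fin (N+2), c (((t + 1 : Fin (N+2)) : ℕ)) = c ((t : ℕ) + 1) := by
    intro t
    have hval : ((t + 1 : Fin (N+2)) : ℕ) = ((t : ℕ) + 1) % (N+2) := by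
      rw [Fin.val_add, Fin.val_one]
    rw [hval, hcmod]
  -- z of c a has an index in path (c (a+1)).1 which is ≥ m
  have hzb : ∀ a : ℕ, ∃ b : Fin (D.paths (c (a+1)).1).length,
      (D.paths (c (a+1)).1).get b = z (c a) ∧ m (c (a+1)).1 ≤ (b : ℕ) :=
    fun a => hzidx (c a) _ (hzland a)
  -- peg inequalities
  have hpq : ∀ t : Fin (N+2), pxf t < qxf t := by
    intro t
    show (D.pos (ui (c (t : ℕ)))).1 < (D.pos (z (c ((t : ℕ) + (N+2) - 1)))).1
    have hzb' := hzb ((t : ℕ) + (N+2) - 1)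
    have h1 : (t : ℕ) + (N+2) - 1 + 1 = (t : ℕ) + (N+2) := by omega
    rw [h1, hcper] at hzb'
    obtain ⟨b, hb, hmb⟩ := hzb'
    rw [← hb]
    exact xlt D (c (t : ℕ)).1 _ _ (by
      show m (c (t : ℕ)).1 - 1 < (b : ℕ)
      have := hlen2 _ (c (t : ℕ)).2
      omega)
  have hYinj : Function.Injective Yf := by
    intro t s h
    by_contra hts
    have hcts : c (t : ℕ) ≠ c (s : ℕ) := by
      have ht2 : (t : ℕ) < N+2 := t.2
      have hs2 : (s : ℕ) < N+2 := s.2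
      have hvne : (t : ℕ) ≠ (s : ℕ) := fun hv => hts (Fin.ext hv)
      rcases lt_or_gt_of_ne hvne with hlt | hgt
      · exact hcdist _ _ hlt hs2
      · exact fun hh => hcdist _ _ hgt ht2 hh.symm
    have hpne : (c (t : ℕ)).1 ≠ (c (s : ℕ)).1 := fun hp => hcts (Subtype.ext hp)
    exact D.diffY _ _ hpne _ (hui_mem _) _ (hui_mem _) h
  obtain ⟨t, s, hts, hcross⟩ := cycle_crossing N Yf pxf qxf hYinj hpq
  -- identify segments with actual edges
  have hseg : ∀ t : Fin (N+2),
      openSegment ℝ ((pxf t, Yf t) : ℝ × ℝ) (qxf (t+1), Yf (t+1)) =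
      openSegment ℝ (D.pos (ui (c (t : ℕ)))) (D.pos (z (c (t : ℕ)))) := by
    intro t
    have h1 : ((pxf t, Yf t) : ℝ × ℝ) = D.pos (ui (c (t : ℕ))) := Prod.mk.eta
    have h2 : ((qxf (t+1), Yf (t+1)) : ℝ × ℝ) = D.pos (z (c (t : ℕ))) := by
      have e1 : qxf (t+1) = (D.pos (z (c (t : ℕ)))).1 :=
        congrArg (fun w => (D.pos (z w)).1) (hidx t)
      have e2 : Yf (t+1) = (D.pos (z (c (t : ℕ)))).2 := by
        have e3 : Yf (t+1) = (D.pos (ui (c ((t : ℕ) + 1)))).2 :=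
          congrArg (fun w => (D.pos (ui w)).2) (hcnext t)
        rw [e3]
        exact D.sameY (c ((t : ℕ) + 1)).1 _ (hui_mem _) _ (hzland (t : ℕ))
      rw [e1, e2]
    rw [h1, h2]
  rw [hseg t, hseg s] at hcross
  -- both are cross edges
  have hcrossedge : ∀ a : ℕ, ∀ i' : Fin k,
      ¬ (ui (c a) ∈ D.paths i' ∧ z (c a) ∈ D.paths i') := by
    rintro a i' ⟨h1, h2⟩
    have e1 : (c a).1 = i' := path_unique D (hui_mem (c a)) h1
    have e2 : (c (a+1)).1 = i' := path_unique D (hzland a) h2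
    have : c (a + 1) = c a := Subtype.ext (e2.trans e1.symm)
    rw [hcf a] at this
    exact hfne (c a) this
  -- the two edges are distinct
  have hdiffsets : ({ui (c (t : ℕ)), z (c (t : ℕ))} : Set V) ≠
      {ui (c (s : ℕ)), z (c (s : ℕ))} := by
    intro hset
    have hmem : ui (c (t : ℕ)) ∈ ({ui (c (s : ℕ)), z (c (s : ℕ))} : Set V) := by
      rw [← hset]; exact Set.mem_insert _ _
    rcases hmem with h | h
    · -- same u: same path index: c t = c s
      have e1 : (c (t : ℕ)).1 = (c (s : ℕ)).1 :=
        path_unique D (hui_mem _) (h ▸ hui_mem (c (s : ℕ)))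
      have hcts : c (t : ℕ) = c (s : ℕ) := Subtype.ext e1
      have ht2 : (t : ℕ) < N+2 := t.2
      have hs2 : (s : ℕ) < N+2 := s.2
      have hvne : (t : ℕ) ≠ (s : ℕ) := fun hv => hts (Fin.ext hv)
      rcases lt_or_gt_of_ne hvne with hlt | hgt
      · exact hcdist _ _ hlt hs2 hcts
      · exact hcdist _ _ hgt ht2 hcts.symm
    · -- u = z : colored = uncolored
      rw [Set.mem_singleton_iff] at h
      exact hz3 (c (s : ℕ)) (h ▸ hui_col (c (t : ℕ)))
  have := D.noncross _ _ _ _ (hz1 (c (t : ℕ))) (hz1 (c (s : ℕ)))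
    (hcrossedge (t : ℕ)) (hcrossedge (s : ℕ)) hdiffsets
  rw [this] at hcross
  exact Set.not_nonempty_empty hcross


lemma schedule (D : ParallelPathsDrawing G k) :
    ∀ (d : ℕ) (m : Fin k → ℕ), (∀ i, min 2 (D.paths i).length ≤ m i) →
      (∀ i, m i ≤ (D.paths i).length) →
      (∑ i, ((D.paths i).length - m i)) = d →
      ∀ (F : Set V) (n : ℕ), Cset D m ⊆ coloredAt G F n →
        Set.univ ⊆ coloredAt G F (n + d) := by
  intro d
  induction d with
  | zero =>
    intro m hml hmu hsum F n hsub v _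
    have hall : ∀ i, m i = (D.paths i).length := by
      intro i
      have := (Finset.sum_eq_zero_iff.mp hsum) i (Finset.mem_univ i)
      have := hmu i
      omega
    obtain ⟨i, hi⟩ := D.cover v
    obtain ⟨p, hp⟩ := List.mem_iff_get.mp hi
    rw [Nat.add_zero]
    exact hsub ⟨i, p, by rw [hall i]; exact p.2, hp⟩
  | succ d ih =>
    intro m hml hmu hsum F n hsub
    have hlen1 : ∀ i, 0 < (D.paths i).length :=
      fun i => List.length_pos_iff.mpr (D.nonempty i)
    have hm1 : ∀ i, 1 ≤ m i := by
      intro i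
      have h1 := hml i
      have h2 := hlen1 i
      rcases le_or_gt 2 (D.paths i).length with h | h
      · rw [min_eq_left h] at h1; omega
      · rw [min_eq_right (by omega)] at h1; omega
    have hinc : ∃ i, m i < (D.paths i).length := by
      by_contra hno
      push_neg at hno
      have : ∑ i, ((D.paths i).length - m i) = 0 :=
        Finset.sum_eq_zero (fun i _ => by have := hno i; omega)
      omega
    obtain ⟨i, hi, hforce⟩ := exists_force D m hml hmu hinc
    classical
    set m' : Fin k → ℕ := Function.update m i (m i + 1) with hm'def
    have hm'i : m' i = m i + 1 := Function.update_self _ _ _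
    have hm'ne : ∀ j, j ≠ i → m' j = m j := fun j hj => Function.update_of_ne hj _ _
    have hml' : ∀ j, min 2 (D.paths j).length ≤ m' j := by
      intro j
      by_cases hj : j = i
      · subst hj; rw [hm'i]; have := hml j; omega
      · rw [hm'ne j hj]; exact hml j
    have hmu' : ∀ j, m' j ≤ (D.paths j).length := by
      intro j
      by_cases hj : j = i
      · subst hj; rw [hm'i]; omega
      · rw [hm'ne j hj]; exact hmu j
    have hsum' : ∑ j, ((D.paths j).length - m' j) = d := by
      have hsplit : ∀ (mm : Fin k → ℕ), ∑ j, ((D.paths j).length - mm j) =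
          ((D.paths i).length - mm i) +
            ∑ j ∈ Finset.univ.erase i, ((D.paths j).length - mm j) :=
        fun mm => (Finset.add_sum_erase _ _ (Finset.mem_univ i)).symm
      have hrest : ∑ j ∈ Finset.univ.erase i, ((D.paths j).length - m' j) =
          ∑ j ∈ Finset.univ.erase i, ((D.paths j).length - m j) :=
        Finset.sum_congr rfl (fun j hj => by
          rw [hm'ne j (Finset.ne_of_mem_erase hj)])
      rw [hsplit m', hrest, hm'i]
      rw [hsplit m] at hsum
      omega
    have hsub' : Cset D m' ⊆ coloredAt G F (n+1) := by
      rintro v ⟨j, p, hp, rfl⟩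
      by_cases hj : j = i
      · subst hj
        rw [hm'i] at hp
        rcases Nat.lt_or_ge (p : ℕ) (m j) with hplt | hpge
        · exact coloredAt_mono G F (Nat.le_succ n) (hsub ⟨j, p, hplt, rfl⟩)
        · have hpm : (p : ℕ) = m j := by omega
          have hveq : (D.paths j).get p = (D.paths j).get ⟨m j, hi⟩ := by
            congr 1
            exact Fin.ext hpm
          rw [hveq]
          apply coloredAt_step hsub (u := (D.paths j).get ⟨m j - 1,
            Nat.lt_of_le_of_lt (Nat.sub_le _ _) hi⟩)
          · exact ⟨j, _, by show m j - 1 < m j; have := hm1 j; omega, rfl⟩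
          · have hadj := adj_consec D j (m j - 1) (by have := hm1 j; omega)
            have : (D.paths j).get ⟨m j - 1 + 1, by have := hm1 j; omega⟩ =
                (D.paths j).get ⟨m j, hi⟩ := by
              congr 1
              apply Fin.ext
              show m j - 1 + 1 = m j
              have := hm1 j
              omega
            rw [← this]
            exact hadj
          · exact hforce
      · rw [hm'ne j hj] at hp
        exact coloredAt_mono G F (Nat.le_succ n) (hsub ⟨j, p, hp, rfl⟩)
    have := ih m' hml' hmu' hsum' F (n+1) hsub'
    rwa [show (n+1) + d = n + (d+1) by omega] at this


lemma part1_final {V : Type} [Fintype V] {G : SimpleGraph V} {k : ℕ}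
    (D : ParallelPathsDrawing G k) (hniso : ∀ v, ∃ u, G.Adj u v) :
    totalForcingNumber G ≤ 2 * k := by
  classical
  have hlen1 : ∀ i, 0 < (D.paths i).length :=
    fun i => List.length_pos_iff.mpr (D.nonempty i)
  set nb : V → V := fun v => (hniso v).choose with hnbdef
  have hnbadj : ∀ v, G.Adj (nb v) v := fun v => (hniso v).choose_spec
  set Fi : Fin k → Finset V := fun i =>
    if h : 2 ≤ (D.paths i).length then
      {(D.paths i).get ⟨0, hlen1 i⟩, (D.paths i).get ⟨1, h⟩}
    else
      {(D.paths i).get ⟨0, hlen1 i⟩, nb ((D.paths i).get ⟨0, hlen1 i⟩)} with hFidef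
  set F : Finset V := Finset.univ.biUnion Fi with hFdef
  have hFi0 : ∀ i, (D.paths i).get ⟨0, hlen1 i⟩ ∈ Fi i := by
    intro i
    show (D.paths i).get ⟨0, hlen1 i⟩ ∈ if h : 2 ≤ (D.paths i).length then _ else _
    by_cases h : 2 ≤ (D.paths i).length
    · rw [dif_pos h]; exact Finset.mem_insert_self _ _
    · rw [dif_neg h]; exact Finset.mem_insert_self _ _
  have hmemF : ∀ i, ∀ x ∈ Fi i, x ∈ F := by
    intro i x hx
    exact Finset.mem_biUnion.mpr ⟨i, Finset.mem_univ i, hx⟩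
  have hcard : F.card ≤ 2 * k := by
    calc F.card ≤ ∑ i, (Fi i).card := Finset.card_biUnion_le
      _ ≤ ∑ _i : Fin k, 2 := by
          apply Finset.sum_le_sum
          intro i _
          show (if h : 2 ≤ (D.paths i).length then _ else _ : Finset V).card ≤ 2
          by_cases h : 2 ≤ (D.paths i).length
          · rw [dif_pos h]
            exact le_trans (Finset.card_insert_le _ _) (by simp)
          · rw [dif_neg h]
            exact le_trans (Finset.card_insert_le _ _) (by simp)
      _ = 2 * k := by simp [mul_comm]
  have hCsub : Cset D (fun i => min 2 (D.paths i).length) ⊆ ↑F := by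
    rintro v ⟨i, p, hp, rfl⟩
    apply Finset.mem_coe.mpr
    apply hmemF i
    have hp' : (p : ℕ) < min 2 (D.paths i).length := hp
    show (D.paths i).get p ∈ if h : 2 ≤ (D.paths i).length then _ else _
    by_cases h : 2 ≤ (D.paths i).length
    · rw [dif_pos h]
      rw [min_eq_left h] at hp'
      rcases (by omega : (p : ℕ) = 0 ∨ (p : ℕ) = 1) with h0 | h1
      · have hpe : p = ⟨0, hlen1 i⟩ := Fin.ext h0
        rw [hpe]
        exact Finset.mem_insert_self _ _
      · have hpe : p = ⟨1, h⟩ := Fin.ext h1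
        rw [hpe]
        exact Finset.mem_insert_of_mem (Finset.mem_singleton_self _)
    · rw [dif_neg h]
      rw [min_eq_right (by omega)] at hp'
      have h0 : (p : ℕ) = 0 := by have := p.2; omega
      have hpe : p = ⟨0, hlen1 i⟩ := Fin.ext h0
      rw [hpe]
      exact Finset.mem_insert_self _ _
  have hforceF : IsForcingSet G ↑F := by
    intro v
    have hsch := schedule D (∑ i, ((D.paths i).length - min 2 (D.paths i).length))
      (fun i => min 2 (D.paths i).length) (fun i => le_refl _)
      (fun i => min_le_right _ _) rfl ↑F 0
      (by rw [coloredAt_zero]; exact hCsub)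
    exact ⟨0 + _, hsch (Set.mem_univ v)⟩
  have htotF : ∀ v ∈ (↑F : Set V), ∃ u ∈ (↑F : Set V), G.Adj u v := by
    intro v hv
    obtain ⟨i, -, hvFi⟩ := Finset.mem_biUnion.mp (Finset.mem_coe.mp hv)
    revert hvFi
    show v ∈ (if h : 2 ≤ (D.paths i).length then _ else _ : Finset V) → _
    by_cases h : 2 ≤ (D.paths i).length
    · rw [dif_pos h]
      intro hvFi
      have hadj01 : G.Adj ((D.paths i).get ⟨0, hlen1 i⟩) ((D.paths i).get ⟨1, h⟩) := by
        have := adj_consec D i 0 (by omega)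
        convert this using 2
      rcases Finset.mem_insert.mp hvFi with rfl | hvFi
      · refine ⟨(D.paths i).get ⟨1, h⟩, ?_, hadj01.symm⟩
        apply hmemF i
        show _ ∈ if h' : 2 ≤ (D.paths i).length then _ else _
        rw [dif_pos h]
        exact Finset.mem_insert_of_mem (Finset.mem_singleton_self _)
      · rw [Finset.mem_singleton] at hvFi
        subst hvFi
        refine ⟨(D.paths i).get ⟨0, hlen1 i⟩, ?_, hadj01⟩
        exact Finset.mem_coe.mpr (hmemF i _ (hFi0 i))
    · rw [dif_neg h]
      intro hvFi
      rcases Finset.mem_insert.mp hvFi with rfl | hvFi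
      · refine ⟨nb ((D.paths i).get ⟨0, hlen1 i⟩), ?_, hnbadj _⟩
        apply Finset.mem_coe.mpr
        apply hmemF i
        show _ ∈ if h' : 2 ≤ (D.paths i).length then _ else _
        rw [dif_neg h]
        exact Finset.mem_insert_of_mem (Finset.mem_singleton_self _)
      · rw [Finset.mem_singleton] at hvFi
        subst hvFi
        refine ⟨(D.paths i).get ⟨0, hlen1 i⟩, ?_, (hnbadj _).symm⟩
        exact Finset.mem_coe.mpr (hmemF i _ (hFi0 i))
  calc totalForcingNumber G ≤ F.card := Nat.sInf_le ⟨F, rfl, hforceF, htotF⟩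
    _ ≤ 2 * k := hcard

end drawing


/-- For a graph of `k`-parallel paths without isolated vertices,
`F_t(G) ≤ 2k`; this bound is sharp, attained by disjoint unions of `k` paths
of order at least two. -/
theorem totalForcing_le_two_k :
    (∀ (V : Type) [Fintype V] (G : SimpleGraph V) (k : ℕ),
      IsGraphOfParallelPaths G k → (∀ v, ∃ u, G.Adj u v) →
        totalForcingNumber G ≤ 2 * k) ∧
    (∀ (k : ℕ) (n : Fin k → ℕ), (∀ i, 2 ≤ n i) →
      totalForcingNumber (disjointPaths k n) = 2 * k) := by
  constructor
  · intro V _ G k hk hniso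
    obtain ⟨D⟩ := hk.1
    exact part1_final D hniso
  · intro k n hn
    exact part2_final k n hn
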